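/- If ε ≥ 1/2, then for every configuration x the matrix S(x) = J(x) + (1−ε)Q(x) is invertible. More precisely, ‖S(x)v‖₁ ≥ (2ε−1)‖v‖₁ for all v, and for ε = 1/2 one still has S(x)v ≠ 0 for v ≠ 0, because the equality Q(x)v = v is impossible for a vector v supported on overcritical sites. -/
import Mathlib


open Finset

/-- Sites of the lattice cube `[1,L]^d ⊆ ℤ^d`. -/
abbrev Site (d L : ℕ) := Fin d → Fin L

/-- Manhattan metric on the lattice. -/
def dLam {d L : ℕ} (i j : Site d L) : ℕ :=
  ∑ n : Fin d, ((i n : ℤ) - (j n : ℤ)).natAbs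

/-- Heaviside function: `θ a = 1` if `a > 0`, else `0`. -/
noncomputable def theta (a : ℝ) : ℝ := if 0 < a then 1 else 0

/-- The Zhang relaxation map. -/
noncomputable def zhangF (d L : ℕ) (Ec ε : ℝ) (x : Site d L → ℝ) : Site d L → ℝ :=
  fun i => x i - theta (x i - Ec) * (1 - ε) * x i
    + ((1 - ε) / (2 * d)) * ∑ j ∈ univ.filter (fun j => dLam i j = 1), theta (x j - Ec) * x j

/-- 1-norm of a configuration. -/
noncomputable def norm1 {d L : ℕ} (x : Site d L → ℝ) : ℝ := ∑ i, |x i|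

open Matrix

/-- The matrix `Q(x)`. -/
noncomputable def Qmat (d L : ℕ) (Ec : ℝ) (x : Site d L → ℝ) :
    Matrix (Site d L) (Site d L) ℝ :=
  fun k l => if dLam k l = 1 then (1 / (2 * d)) * theta (x l - Ec) else 0

/-- The diagonal matrix `J(x)`. -/
noncomputable def Jmat (d L : ℕ) (Ec ε : ℝ) (x : Site d L → ℝ) :
    Matrix (Site d L) (Site d L) ℝ :=
  Matrix.diagonal (fun l => 1 - (1 - ε) * theta (x l - Ec))

/-- The one-step relaxation matrix `S(x) = J(x) + (1-ε) Q(x)`. -/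
noncomputable def Smat (d L : ℕ) (Ec ε : ℝ) (x : Site d L → ℝ) :
    Matrix (Site d L) (Site d L) ℝ :=
  Jmat d L Ec ε x + (1 - ε) • Qmat d L Ec x

/-! ### Auxiliary lemmas -/

section helpers
variable {d L : ℕ}

lemma theta_nonneg (a : ℝ) : 0 ≤ theta a := by unfold theta; split <;> norm_num

lemma theta_le_one (a : ℝ) : theta a ≤ 1 := by unfold theta; split <;> norm_num

lemma dLam_self (i : Site d L) : dLam i i = 0 := by
  unfold dLam; simp

lemma dLam_comm (i j : Site d L) : dLam i j = dLam j i := by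
  unfold dLam
  exact Finset.sum_congr rfl (fun n _ => by omega)

lemma exists_nbr_coord (i j : Site d L) (h : dLam i j = 1) :
    ∃ n : Fin d, (∀ m, m ≠ n → j m = i m) ∧
      (((j n : ℤ) = (i n : ℤ) + 1) ∨ ((j n : ℤ) = (i n : ℤ) - 1)) ∧ j n ≠ i n := by
  unfold dLam at h
  have hex : ∃ n : Fin d, ((i n : ℤ) - (j n : ℤ)).natAbs ≠ 0 := by
    by_contra hc
    push_neg at hc
    rw [Finset.sum_eq_zero (fun n _ => hc n)] at h
    omega
  obtain ⟨n, hn⟩ := hex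
  have hmem : n ∈ (univ : Finset (Fin d)) := mem_univ n
  rw [← Finset.add_sum_erase _ _ hmem] at h
  have hsum0 : ∑ m ∈ univ.erase n, ((i m : ℤ) - (j m : ℤ)).natAbs = 0 := by omega
  rw [Finset.sum_eq_zero_iff_of_nonneg (fun m _ => Nat.zero_le _)] at hsum0
  refine ⟨n, ?_, ?_, ?_⟩
  · intro m hm
    have h0 := hsum0 m (Finset.mem_erase.mpr ⟨hm, mem_univ m⟩)
    have : (i m : ℤ) = (j m : ℤ) := by omega
    exact (Fin.ext (by exact_mod_cast this.symm))
  · have h1 : ((i n : ℤ) - (j n : ℤ)).natAbs = 1 := by omega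
    omega
  · intro hjn
    rw [hjn] at hn
    simp at hn

/-- The unique lattice direction from `i` to a neighbour `j`. -/
noncomputable def dirOf (hd : 0 < d) (i j : Site d L) : Fin d × Bool :=
  if h : ∃ n, j n ≠ i n then (h.choose, decide ((i h.choose : ℕ) < (j h.choose : ℕ)))
  else (⟨0, hd⟩, false)

lemma dirOf_spec (hd : 0 < d) (i j : Site d L) (h : dLam i j = 1) :
    (∀ m, m ≠ (dirOf hd i j).1 → j m = i m) ∧
      ((dirOf hd i j).2 = true ∧ (j (dirOf hd i j).1 : ℤ) = (i (dirOf hd i j).1 : ℤ) + 1 ∨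
       (dirOf hd i j).2 = false ∧ (j (dirOf hd i j).1 : ℤ) = (i (dirOf hd i j).1 : ℤ) - 1) := by
  obtain ⟨n, hall, hpm, hne⟩ := exists_nbr_coord i j h
  have hex : ∃ m, j m ≠ i m := ⟨n, hne⟩
  have h1 : (dirOf hd i j).1 = n := by
    unfold dirOf
    rw [dif_pos hex]
    by_contra hc
    exact hex.choose_spec (hall _ (by simpa using hc))
  have h2 : (dirOf hd i j).2 = decide ((i n : ℕ) < (j n : ℕ)) := by
    unfold dirOf
    rw [dif_pos hex]
    simp only
    congr 1 <;> rw [show hex.choose = n from by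
      by_contra hc
      exact hex.choose_spec (hall _ hc)]
  refine ⟨by rw [h1]; exact hall, ?_⟩
  rw [h1, h2]
  rcases hpm with hp | hm
  · left
    exact ⟨by simp; omega, hp⟩
  · right
    exact ⟨by simp; omega, hm⟩

lemma dirOf_injOn (hd : 0 < d) (i : Site d L) :
    Set.InjOn (dirOf hd i) ↑(univ.filter fun j => dLam i j = 1) := by
  intro a ha b hb hab
  simp only [coe_filter, Set.mem_setOf_eq] at ha hb
  obtain ⟨ha1, ha2⟩ := dirOf_spec hd i a ha.2
  obtain ⟨hb1, hb2⟩ := dirOf_spec hd i b hb.2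
  funext m
  by_cases hm : m = (dirOf hd i a).1
  · subst hm
    have hb1' := hab ▸ hb1
    have hb2' := hab ▸ hb2
    apply Fin.ext
    have : (a (dirOf hd i a).1 : ℤ) = (b (dirOf hd i a).1 : ℤ) := by
      rcases ha2 with ⟨hta, hva⟩ | ⟨hta, hva⟩ <;>
        rcases hb2' with ⟨htb, hvb⟩ | ⟨htb, hvb⟩
      · rw [hva, hvb]
      · simp [hta] at htb
      · simp [hta] at htb
      · rw [hva, hvb]
    exact_mod_cast this
  · rw [ha1 m hm, hb1 m (hab ▸ hm)]

lemma card_nbrs (hd : 0 < d) (i : Site d L) :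
    (univ.filter fun j => dLam i j = 1).card ≤ 2 * d := by
  have h := Finset.card_le_card_of_injOn (dirOf hd i)
    (fun a _ => mem_univ _) (dirOf_injOn hd i)
  simpa [Fintype.card_prod, mul_comm] using h

lemma nbrs_surj (hd : 0 < d) (i : Site d L)
    (hcard : 2 * d ≤ (univ.filter fun j => dLam i j = 1).card) :
    ∃ j, dLam i j = 1 ∧ (j ⟨0, hd⟩ : ℕ) = (i ⟨0, hd⟩ : ℕ) + 1 := by
  set N := univ.filter fun j => dLam i j = 1 with hN
  have himg : (N.image (dirOf hd i)).card = N.card := card_image_of_injOn (dirOf_injOn hd i)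
  have huniv : N.image (dirOf hd i) = univ := by
    apply Finset.eq_of_subset_of_card_le (subset_univ _)
    rw [himg]
    simpa [Fintype.card_prod, mul_comm] using hcard
  have hmem : ((⟨0, hd⟩, true) : Fin d × Bool) ∈ N.image (dirOf hd i) := huniv ▸ mem_univ _
  obtain ⟨j, hjN, hj⟩ := mem_image.mp hmem
  have hdl : dLam i j = 1 := (mem_filter.mp hjN).2
  obtain ⟨-, hspec⟩ := dirOf_spec hd i j hdl
  refine ⟨j, hdl, ?_⟩
  rw [hj] at hspec
  rcases hspec with ⟨-, hv⟩ | ⟨ht, -⟩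
  · simp only at hv; omega
  · simp at ht

/-! ### Matrix entry lemmas -/

lemma Smat_diag (Ec ε : ℝ) (x : Site d L → ℝ) (k : Site d L) :
    Smat d L Ec ε x k k = 1 - (1 - ε) * theta (x k - Ec) := by
  simp [Smat, Jmat, Qmat, Matrix.add_apply, Matrix.smul_apply, Matrix.diagonal_apply_eq,
    dLam_self]

lemma Smat_off (Ec ε : ℝ) (x : Site d L → ℝ) {k l : Site d L} (h : k ≠ l) :
    Smat d L Ec ε x k l
      = (1 - ε) * (if dLam k l = 1 then (1 / (2 * (d : ℝ))) * theta (x l - Ec) else 0) := by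
  simp [Smat, Jmat, Qmat, Matrix.add_apply, Matrix.smul_apply, Matrix.diagonal_apply_ne _ h]

lemma Smat_diag_ge (Ec : ℝ) {ε : ℝ} (hε1 : ε ≤ 1) (x : Site d L → ℝ) (k : Site d L) :
    ε ≤ Smat d L Ec ε x k k := by
  rw [Smat_diag]
  nlinarith [theta_nonneg (x k - Ec), theta_le_one (x k - Ec)]

lemma Smat_off_nonneg (Ec : ℝ) {ε : ℝ} (hε1 : ε ≤ 1) (x : Site d L → ℝ)
    {k l : Site d L} (h : k ≠ l) : 0 ≤ Smat d L Ec ε x k l := by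
  rw [Smat_off Ec ε x h]
  have := theta_nonneg (x l - Ec)
  have hd0 : (0:ℝ) ≤ 1 / (2 * (d:ℝ)) := by positivity
  split
  · exact mul_nonneg (by linarith) (mul_nonneg hd0 this)
  · simp

lemma col_offsum_le (hd : 0 < d) (Ec : ℝ) {ε : ℝ} (hε1 : ε ≤ 1) (x : Site d L → ℝ)
    (l : Site d L) :
    ∑ k ∈ univ.erase l, Smat d L Ec ε x k l ≤ (1 - ε) * theta (x l - Ec) := by
  set θ := theta (x l - Ec) with hθdef
  have hθ0 := theta_nonneg (x l - Ec)
  have hstep : ∀ k ∈ univ.erase l, Smat d L Ec ε x k l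
      = (1 - ε) * (if dLam k l = 1 then (1 / (2 * (d : ℝ))) * θ else 0) := by
    intro k hk
    exact Smat_off Ec ε x (mem_erase.mp hk).1
  rw [Finset.sum_congr rfl hstep, ← Finset.mul_sum]
  have h2 : ∑ k ∈ univ.erase l, (if dLam k l = 1 then (1 / (2 * (d : ℝ))) * θ else 0)
      = ∑ k : Site d L, (if dLam k l = 1 then (1 / (2 * (d : ℝ))) * θ else 0) :=
    Finset.sum_erase _ (by simp [dLam_self])
  rw [h2, ← Finset.sum_filter, Finset.sum_const, nsmul_eq_mul]
  have hfe : (univ.filter fun k : Site d L => dLam k l = 1)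
      = (univ.filter fun k => dLam l k = 1) := by
    apply Finset.filter_congr
    intro k _
    rw [dLam_comm]
  have hc : ((univ.filter fun k : Site d L => dLam k l = 1).card : ℝ) ≤ 2 * d := by
    rw [hfe]
    exact_mod_cast card_nbrs hd l
  have hdpos : (0:ℝ) < 2 * (d:ℝ) := by positivity
  have key : ((univ.filter fun k : Site d L => dLam k l = 1).card : ℝ)
      * ((1 / (2 * (d : ℝ))) * θ) ≤ θ := by
    have h1 : ((univ.filter fun k : Site d L => dLam k l = 1).card : ℝ)
        * ((1 / (2 * (d : ℝ))) * θ) ≤ (2 * (d:ℝ)) * ((1 / (2 * (d : ℝ))) * θ) :=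
      mul_le_mul_of_nonneg_right hc (by positivity)
    have h2' : (2 * (d:ℝ)) * ((1 / (2 * (d : ℝ))) * θ) = θ := by field_simp
    linarith
  exact mul_le_mul_of_nonneg_left key (by linarith)

/-! ### The lower bound on the 1-norm -/

lemma norm1_lower (hd : 0 < d) (Ec : ℝ) {ε : ℝ} (hε : (1:ℝ)/2 ≤ ε) (hε1 : ε ≤ 1)
    (x : Site d L → ℝ) (v : Site d L → ℝ) :
    ∑ l, (1 - 2 * (1 - ε) * theta (x l - Ec)) * |v l|
      ≤ norm1 ((Smat d L Ec ε x).mulVec v) := by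
  set S := Smat d L Ec ε x with hS
  have hmv : ∀ k, (S.mulVec v) k = ∑ l, S k l * v l := by
    intro k
    simp [Matrix.mulVec, dotProduct, hS]
  have step1 : ∀ k, S k k * |v k| - ∑ l ∈ univ.erase k, S k l * |v l|
      ≤ |(S.mulVec v) k| := by
    intro k
    rw [hmv k, ← Finset.add_sum_erase _ _ (mem_univ k)]
    have h0 : (0:ℝ) ≤ S k k := le_trans (by linarith) (Smat_diag_ge Ec hε1 x k)
    have hdiagabs : |S k k * v k| = S k k * |v k| := by
      rw [abs_mul, abs_of_nonneg h0]
    have htail : |∑ l ∈ univ.erase k, S k l * v l| ≤ ∑ l ∈ univ.erase k, S k l * |v l| := by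
      refine le_trans (Finset.abs_sum_le_sum_abs _ _) (Finset.sum_le_sum ?_)
      intro l hl
      rw [abs_mul, abs_of_nonneg (Smat_off_nonneg Ec hε1 x ((mem_erase.mp hl).1.symm))]
    have habs := abs_sub_abs_le_abs_sub (S k k * v k) (-(∑ l ∈ univ.erase k, S k l * v l))
    rw [abs_neg, sub_neg_eq_add] at habs
    linarith
  have step2 : ∑ k, S k k * |v k| - ∑ k, ∑ l ∈ univ.erase k, S k l * |v l|
      ≤ norm1 (S.mulVec v) := by
    have h := Finset.sum_le_sum (s := (univ : Finset (Site d L))) (fun k _hk => step1 k)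
    rw [Finset.sum_sub_distrib] at h
    exact h
  have hswap : ∑ k, ∑ l ∈ univ.erase k, S k l * |v l|
      = ∑ l, ∑ k ∈ univ.erase l, S k l * |v l| := by
    have e1 : ∀ k : Site d L, ∑ l ∈ univ.erase k, S k l * |v l|
        = (∑ l, S k l * |v l|) - S k k * |v k| := fun k =>
      Finset.sum_erase_eq_sub (mem_univ k)
    have e2 : ∀ l : Site d L, ∑ k ∈ univ.erase l, S k l * |v l|
        = (∑ k, S k l * |v l|) - S l l * |v l| := fun l =>
      Finset.sum_erase_eq_sub (mem_univ l)
    rw [Finset.sum_congr rfl (fun k _ => e1 k), Finset.sum_congr rfl (fun l _ => e2 l),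
      Finset.sum_sub_distrib, Finset.sum_sub_distrib, Finset.sum_comm]
  have step4 : ∀ l : Site d L, ∑ k ∈ univ.erase l, S k l * |v l|
      ≤ (1 - ε) * theta (x l - Ec) * |v l| := by
    intro l
    rw [← Finset.sum_mul]
    exact mul_le_mul_of_nonneg_right (col_offsum_le hd Ec hε1 x l) (abs_nonneg _)
  have final : ∑ l, (1 - 2 * (1 - ε) * theta (x l - Ec)) * |v l|
      ≤ ∑ k, S k k * |v k| - ∑ l, ∑ k ∈ univ.erase l, S k l * |v l| := by
    have hA : ∑ l, ∑ k ∈ univ.erase l, S k l * |v l|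
        ≤ ∑ l, (1 - ε) * theta (x l - Ec) * |v l| :=
      Finset.sum_le_sum (fun l _ => step4 l)
    have hB : ∑ k, S k k * |v k| = ∑ k, (1 - (1 - ε) * theta (x k - Ec)) * |v k| := by
      refine Finset.sum_congr rfl (fun k _ => ?_)
      rw [hS, Smat_diag]
    rw [hB]
    have : ∑ l, (1 - 2 * (1 - ε) * theta (x l - Ec)) * |v l|
        = ∑ k, (1 - (1 - ε) * theta (x k - Ec)) * |v k|
          - ∑ l, (1 - ε) * theta (x l - Ec) * |v l| := by
      rw [← Finset.sum_sub_distrib]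
      refine Finset.sum_congr rfl (fun l _ => by ring)
    rw [this]
    linarith
  rw [hswap] at step2
  linarith

/-! ### Injectivity -/

lemma mulVec_eq_zero (hd : 0 < d) (hL : 0 < L) (Ec : ℝ) {ε : ℝ}
    (hε : (1:ℝ)/2 ≤ ε) (hε1 : ε < 1) (x : Site d L → ℝ) (v : Site d L → ℝ)
    (hv : (Smat d L Ec ε x).mulVec v = 0) : v = 0 := by
  by_contra hne
  set S := Smat d L Ec ε x with hS
  obtain ⟨i0, hi0⟩ := Function.ne_iff.mp hne
  have hi0' : v i0 ≠ 0 := hi0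
  have hne' : (univ : Finset (Site d L)).Nonempty := ⟨i0, mem_univ i0⟩
  set M := univ.sup' hne' (fun i => |v i|) with hM
  have hMax : ∀ i, |v i| ≤ M := fun i => Finset.le_sup' (fun i => |v i|) (mem_univ i)
  have hMpos : 0 < M := lt_of_lt_of_le (abs_pos.mpr hi0') (hMax i0)
  obtain ⟨iM, -, hiM⟩ := Finset.exists_mem_eq_sup' hne' (fun i => |v i|)
  set A := univ.filter (fun i => |v i| = M) with hA
  have hAne : A.Nonempty := ⟨iM, mem_filter.mpr ⟨mem_univ _, hiM.symm⟩⟩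
  obtain ⟨m, hmA, hmax⟩ := Finset.exists_max_image A (fun i => (i ⟨0, hd⟩ : ℕ)) hAne
  have hvm : |v m| = M := (mem_filter.mp hmA).2
  -- the equation at row m
  have heq : ∑ l, S m l * v l = 0 := by
    have := congrFun hv m
    simpa [Matrix.mulVec, dotProduct, hS] using this
  rw [← Finset.add_sum_erase _ _ (mem_univ m)] at heq
  have hdd : S m m * v m = -(∑ l ∈ univ.erase m, S m l * v l) := by linarith
  have hle1 : ε ≤ 1 := le_of_lt hε1
  have h0 : (0:ℝ) ≤ S m m := le_trans (by linarith) (Smat_diag_ge Ec hle1 x m)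
  have habs : S m m * M = |∑ l ∈ univ.erase m, S m l * v l| := by
    rw [← abs_neg, ← hdd, abs_mul, abs_of_nonneg h0, hvm]
  set N := univ.filter (fun j : Site d L => dLam m j = 1) with hN
  set T := ∑ l ∈ N, theta (x l - Ec) * |v l| with hT
  have htail : |∑ l ∈ univ.erase m, S m l * v l|
      ≤ (1 - ε) * (1 / (2 * (d:ℝ))) * T := by
    refine le_trans (Finset.abs_sum_le_sum_abs _ _) ?_
    have hrw : ∀ l ∈ univ.erase m, |S m l * v l|
        = (1 - ε) * (if dLam m l = 1 then (1 / (2 * (d:ℝ))) * theta (x l - Ec) else 0) * |v l| := by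
      intro l hl
      rw [abs_mul, abs_of_nonneg (Smat_off_nonneg Ec hle1 x (Ne.symm (mem_erase.mp hl).1)),
        Smat_off Ec ε x (Ne.symm (mem_erase.mp hl).1)]
    rw [Finset.sum_congr rfl hrw]
    have hext : ∑ l ∈ univ.erase m,
        (1 - ε) * (if dLam m l = 1 then (1 / (2 * (d:ℝ))) * theta (x l - Ec) else 0) * |v l|
        = ∑ l : Site d L,
          (1 - ε) * (if dLam m l = 1 then (1 / (2 * (d:ℝ))) * theta (x l - Ec) else 0) * |v l| :=
      Finset.sum_erase _ (by simp [dLam_self])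
    rw [hext]
    have : ∀ l : Site d L,
        (1 - ε) * (if dLam m l = 1 then (1 / (2 * (d:ℝ))) * theta (x l - Ec) else 0) * |v l|
        = (if dLam m l = 1 then (1 - ε) * (1 / (2 * (d:ℝ))) * (theta (x l - Ec) * |v l|) else 0) := by
      intro l
      split <;> ring
    rw [Finset.sum_congr rfl (fun l _ => this l), ← Finset.sum_filter, ← hN, ← Finset.mul_sum, ← hT]
  have hεM : ε * M ≤ (1 - ε) * (1 / (2 * (d:ℝ))) * T := by
    have h1 : ε * M ≤ S m m * M :=
      mul_le_mul_of_nonneg_right (Smat_diag_ge Ec hle1 x m) (le_of_lt hMpos)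
    rw [habs] at h1
    linarith
  have hdR : (0:ℝ) < (d:ℝ) := by exact_mod_cast hd
  have hTle : T ≤ (N.card : ℝ) * M := by
    have : ∀ l ∈ N, theta (x l - Ec) * |v l| ≤ M := by
      intro l _
      have h1 := theta_le_one (x l - Ec)
      have h2 := theta_nonneg (x l - Ec)
      have h3 := abs_nonneg (v l)
      have h4 := hMax l
      have h5 : theta (x l - Ec) * |v l| ≤ 1 * |v l| := mul_le_mul_of_nonneg_right h1 h3
      linarith
    calc T ≤ ∑ _l ∈ N, M := Finset.sum_le_sum this
    _ = (N.card : ℝ) * M := by rw [Finset.sum_const, nsmul_eq_mul]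
  have hcard_le : (N.card : ℝ) ≤ 2 * (d:ℝ) := by exact_mod_cast card_nbrs hd m
  have hpos2d : (0:ℝ) < 2 * (d:ℝ) := by positivity
  have hTge : 2 * (d:ℝ) * M ≤ T := by
    have hmul := mul_le_mul_of_nonneg_left hεM (le_of_lt hpos2d)
    have hr : 2 * (d:ℝ) * ((1 - ε) * (1 / (2 * (d:ℝ))) * T) = (1 - ε) * T := by
      field_simp
    rw [hr] at hmul
    by_contra hc
    push_neg at hc
    have hlt : (1 - ε) * T < (1 - ε) * (2 * (d:ℝ) * M) :=
      mul_lt_mul_of_pos_left hc (by linarith)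
    have hq : 0 ≤ (2 * ε - 1) * (2 * (d:ℝ) * M) :=
      mul_nonneg (by linarith) (by positivity)
    nlinarith [hmul, hlt, hq]
  have hcard_ge : 2 * d ≤ N.card := by
    have : 2 * (d:ℝ) * M ≤ (N.card : ℝ) * M := le_trans hTge hTle
    have h2 : 2 * (d:ℝ) ≤ (N.card : ℝ) := by
      by_contra hc
      push_neg at hc
      nlinarith
    exact_mod_cast h2
  -- all neighbour terms are equal to M
  have hcard_eq : N.card = 2 * d := le_antisymm (card_nbrs hd m) hcard_ge
  have hcardR : ((N.card) : ℝ) = 2 * (d:ℝ) := by exact_mod_cast hcard_eq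
  have hTeq : T = 2 * (d:ℝ) * M := le_antisymm (hcardR ▸ hTle) hTge
  have hterms : ∀ l ∈ N, M - theta (x l - Ec) * |v l| = 0 := by
    have hsum0 : ∑ l ∈ N, (M - theta (x l - Ec) * |v l|) = 0 := by
      rw [Finset.sum_sub_distrib, Finset.sum_const, nsmul_eq_mul, ← hT]
      rw [hcardR, hTeq]
      ring
    rw [Finset.sum_eq_zero_iff_of_nonneg] at hsum0
    · exact hsum0
    · intro l _
      have h1 := theta_le_one (x l - Ec)
      have h2 := theta_nonneg (x l - Ec)
      have h3 := abs_nonneg (v l)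
      have h4 := hMax l
      have h5 : theta (x l - Ec) * |v l| ≤ 1 * |v l| := mul_le_mul_of_nonneg_right h1 h3
      linarith
  -- find the neighbour in the positive first direction
  obtain ⟨j, hj1, hj2⟩ := nbrs_surj hd m (by exact_mod_cast hcard_ge)
  have hjN : j ∈ N := mem_filter.mpr ⟨mem_univ _, hj1⟩
  have hjM : |v j| = M := by
    have h := hterms j hjN
    have h1 := theta_le_one (x j - Ec)
    have h2 := theta_nonneg (x j - Ec)
    have h3 := abs_nonneg (v j)
    have h4 := hMax j
    have h5 : theta (x j - Ec) * |v j| ≤ 1 * |v j| := mul_le_mul_of_nonneg_right h1 h3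
    linarith
  have hjA : j ∈ A := mem_filter.mpr ⟨mem_univ _, hjM⟩
  have := hmax j hjA
  omega

/-! ### The main theorem -/

theorem zhang_S_invertible_of_half_le_eps
    (d L : ℕ) (hd : 0 < d) (hL : 0 < L)
    (Ec ε : ℝ) (hEc : 0 < Ec) (hε : (1:ℝ)/2 ≤ ε) (hε1 : ε < 1)
    (x : Site d L → ℝ) (hx : ∀ i, 0 ≤ x i) :
    IsUnit (Smat d L Ec ε x) ∧
      (∀ v : Site d L → ℝ,
        (2 * ε - 1) * norm1 v ≤ norm1 ((Smat d L Ec ε x).mulVec v)) ∧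
      (∀ v : Site d L → ℝ, v ≠ 0 → (Smat d L Ec ε x).mulVec v ≠ 0) := by
  have hle1 : ε ≤ 1 := le_of_lt hε1
  have hbound : ∀ v : Site d L → ℝ,
      (2 * ε - 1) * norm1 v ≤ norm1 ((Smat d L Ec ε x).mulVec v) := by
    intro v
    refine le_trans ?_ (norm1_lower hd Ec hε hle1 x v)
    rw [norm1, Finset.mul_sum]
    refine Finset.sum_le_sum (fun l _ => ?_)
    have h1 := theta_le_one (x l - Ec)
    have h2 := theta_nonneg (x l - Ec)
    have h3 := abs_nonneg (v l)
    nlinarith [mul_nonneg (mul_nonneg (sub_nonneg.mpr hle1) (sub_nonneg.mpr h1)) h3]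
  have hinj : ∀ v : Site d L → ℝ, (Smat d L Ec ε x).mulVec v = 0 → v = 0 :=
    fun v hv => mulVec_eq_zero hd hL Ec hε hε1 x v hv
  refine ⟨?_, hbound, fun v hv0 hv => hv0 (hinj v hv)⟩
  rw [Matrix.isUnit_iff_isUnit_det, isUnit_iff_ne_zero]
  intro hdet
  obtain ⟨v, hv0, hv⟩ := Matrix.exists_mulVec_eq_zero_iff.mpr hdet
  exact hv0 (hinj v hv)
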